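/- Let k be a σ-field, A a nonzero k-σ-algebra, n ≥ 1, and λ₀, …, λ_{n−1} ∈ k. Define L_k : k → k by L_k(x) = σ_k^n(x) + Σ_{i<n} λᵢ · σ_k^i(x) and L_A : A → A by L_A(x) = σ_A^n(x) + Σ_{i<n} algebraMap k A (λᵢ) · σ_A^i(x). Let α, α' ∈ A. Then the following are equivalent: (i) there exists g ∈ A with L_A(g) = 0 and 1 ⊗ α' − α' ⊗ 1 = 1 ⊗ (α + g) − (α + g) ⊗ 1 in A ⊗[k] A; (ii) there exists μ ∈ k with L_A(α' − α) = algebraMap k A (L_k(μ)). (This is the criterion for when two elements α, α' define cohomologous additive 1-cocycles for the σ-closed subgroup G of 𝔾ₐ defined by L(y) = 0, underlying the classification of the G-torsors X_a up to isomorphism.) -/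

import Mathlib

open TensorProduct

lemma tmul_one_eq_one_tmul_imp (k A : Type*) [Field k] [CommRing A]
    [Algebra k A] [Nontrivial A] (x : A)
    (h : (1 : A) ⊗ₜ[k] x = x ⊗ₜ[k] (1 : A)) : ∃ c : k, x = algebraMap k A c := by
  classical
  have h1 : LinearIndepOn k id ({(1 : A)} : Set A) :=
    LinearIndepOn.singleton (v := id) one_ne_zero
  let b := Module.Basis.extend h1
  let i0 : h1.extend (Set.subset_univ _) :=
    ⟨1, h1.subset_extend _ (Set.mem_singleton _)⟩
  have hb0 : b i0 = 1 := Module.Basis.extend_apply_self h1 i0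
  have key := fun j => congrArg (fun z => (Module.Basis.tensorProduct b b).repr z (j, i0)) h
  simp only [Module.Basis.tensorProduct_repr_tmul_apply] at key
  have hr1 : b.repr 1 = Finsupp.single i0 1 := by
    calc b.repr 1 = b.repr (b i0) := by rw [hb0]
    _ = Finsupp.single i0 1 := b.repr_self i0
  have hx : b.repr x = Finsupp.single i0 (b.repr x i0) := by
    ext j
    rcases eq_or_ne j i0 with rfl | hj
    · simp
    · have hkey := key j
      rw [hr1, Finsupp.single_apply, Finsupp.single_apply, if_neg (Ne.symm hj),
        if_pos rfl, smul_zero, one_smul] at hkey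
      rw [Finsupp.single_apply, if_neg (Ne.symm hj), ← hkey]
  have hx2 := congrArg b.repr.symm hx
  rw [b.repr.symm_apply_apply, Module.Basis.repr_symm_single] at hx2
  refine ⟨b.repr x i0, ?_⟩
  conv_lhs => rw [hx2, hb0]
  rw [Algebra.algebraMap_eq_smul_one]

lemma pow_algebraMap_comm (k A : Type*) [Field k] [CommRing A] [Algebra k A]
    (σk : k →+* k) (σA : A →+* A)
    (hσ : ∀ c : k, σA (algebraMap k A c) = algebraMap k A (σk c))
    (m : ℕ) (c : k) : (σA ^ m) (algebraMap k A c) = algebraMap k A ((σk ^ m) c) := by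
  induction m with
  | zero => simp
  | succ m ih =>
    simp only [RingHom.coe_pow, Function.iterate_succ', Function.comp_apply] at *
    rw [ih, hσ]

/-- Two additive 1-cocycles `1 ⊗ α − α ⊗ 1` and `1 ⊗ α' − α' ⊗ 1` for the
σ-closed subgroup `G ≤ 𝔾ₐ` defined by `L(y) = 0` are cohomologous iff
`L(α' − α) ∈ L(k)`. -/
theorem cocycles_Ga_subgroup_equivalent_iff (k A : Type*) [Field k] [CommRing A]
    [Algebra k A] [Nontrivial A]
    (σk : k →+* k) (σA : A →+* A)
    (hσ : ∀ c : k, σA (algebraMap k A c) = algebraMap k A (σk c))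
    (n : ℕ) (hn : 1 ≤ n) (lam : Fin n → k)
    (α α' : A) :
    (∃ g : A,
      (σA ^ n) g + ∑ i : Fin n, algebraMap k A (lam i) * (σA ^ (i : ℕ)) g = 0 ∧
      (1 : A) ⊗ₜ[k] α' - α' ⊗ₜ[k] (1 : A) =
        (1 : A) ⊗ₜ[k] (α + g) - (α + g) ⊗ₜ[k] (1 : A)) ↔
    (∃ μ : k,
      (σA ^ n) (α' - α) +
          ∑ i : Fin n, algebraMap k A (lam i) * (σA ^ (i : ℕ)) (α' - α) =
        algebraMap k A ((σk ^ n) μ + ∑ i : Fin n, lam i * (σk ^ (i : ℕ)) μ)) := by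
  constructor
  · rintro ⟨g, hg, hten⟩
    have hx : (1 : A) ⊗ₜ[k] (α' - α - g) = (α' - α - g) ⊗ₜ[k] (1 : A) := by
      have : (1 : A) ⊗ₜ[k] α' - (1 : A) ⊗ₜ[k] (α + g)
          = α' ⊗ₜ[k] (1 : A) - (α + g) ⊗ₜ[k] (1 : A) := by
        rw [sub_eq_sub_iff_sub_eq_sub]; exact hten
      rw [← TensorProduct.tmul_sub, ← TensorProduct.sub_tmul] at this
      rw [show α' - α - g = α' - (α + g) by ring]; exact this
    obtain ⟨μ, hμ⟩ := tmul_one_eq_one_tmul_imp k A _ hx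
    refine ⟨μ, ?_⟩
    have hga : α' - α = g + algebraMap k A μ := by rw [← hμ]; ring
    rw [hga]
    simp only [map_add, mul_add, Finset.sum_add_distrib,
      pow_algebraMap_comm k A σk σA hσ]
    simp only [map_add, map_sum, map_mul]
    linear_combination hg
  · rintro ⟨μ, hμ⟩
    refine ⟨α' - α - algebraMap k A μ, ?_, ?_⟩
    · have hsplit : ∀ m : ℕ, (σA ^ m) (α' - α - algebraMap k A μ)
          = (σA ^ m) (α' - α) - algebraMap k A ((σk ^ m) μ) := fun m => by
        rw [map_sub, pow_algebraMap_comm k A σk σA hσ]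
      simp only [hsplit, mul_sub, Finset.sum_sub_distrib]
      simp only [map_add, map_sum, map_mul] at hμ
      linear_combination hμ
    · have h1 : (1 : A) ⊗ₜ[k] algebraMap k A μ = algebraMap k A μ ⊗ₜ[k] (1 : A) := by
        rw [Algebra.algebraMap_eq_smul_one]
        exact (TensorProduct.smul_tmul μ (1:A) (1:A)).symm
      have : α + (α' - α - algebraMap k A μ) = α' - algebraMap k A μ := by ring
      rw [this, TensorProduct.tmul_sub, TensorProduct.sub_tmul, h1]
      ring
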